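/- Assume f : ℝⁿ × ℝ^d → ℝⁿ is continuous and, for every ε > 0, Lipschitz in its first variable uniformly in the second on B(0,ε). For each k ∈ ℕ let z^k = (x^k, u^k, a^k) be a triple of W^{1,2} functions on [0,T] such that −ẋ^k(t) ∈ N(x^k(t) − u^k(t); C) + f(x^k(t), a^k(t)) for a.e. t ∈ [0,T]. Suppose z^k → z̄ = (x̄, ū, ā) uniformly on [0,T], where z̄ is of class W^{1,2}, and ż^k → ż̄ weakly in L²([0,T];ℝ^{2n+d}) (i.e., ∫₀ᵀ ⟨ż^k(t) − ż̄(t), g(t)⟩ dt → 0 for every g ∈ L²). Then x̄(t) − ū(t) ∈ C for all t ∈ [0,T] and −ẋ̄(t) ∈ N(x̄(t) − ū(t); C) + f(x̄(t), ā(t)) for a.e. t ∈ [0,T]. -/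

import Mathlib

open MeasureTheory Set Metric Filter
open scoped Pointwise RealInnerProductSpace Topology

/-- `ℝⁿ` with the Euclidean norm. -/
abbrev En (n : ℕ) := EuclideanSpace ℝ (Fin n)

/-- A function `g : [0,T] → E` is of class `W^{1,2}([0,T]; E)` with L² derivative `dg`. -/
def IsW12On {E : Type*} [NormedAddCommGroup E] [NormedSpace ℝ E]
    (g dg : ℝ → E) (T : ℝ) : Prop :=
  MemLp dg 2 (volume.restrict (Set.Icc 0 T)) ∧
  ∀ t ∈ Set.Icc (0 : ℝ) T, g t = g 0 + ∫ s in (0:ℝ)..t, dg s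

/-- Normal cone to a convex set `C` at `x` (empty when `x ∉ C`). -/
def normalCone {n : ℕ} (C : Set (En n)) (x : En n) : Set (En n) :=
  {v | x ∈ C ∧ ∀ y ∈ C, ⟪v, y - x⟫ ≤ 0}

lemma finiteIcc (T : ℝ) : IsFiniteMeasure (volume.restrict (Set.Icc (0:ℝ) T)) := by
  constructor
  rw [Measure.restrict_apply_univ]
  exact (measure_Icc_lt_top)

lemma integrable_of_W12 {E : Type*} [NormedAddCommGroup E] [NormedSpace ℝ E]
    {g dg : ℝ → E} {T : ℝ} (h : IsW12On g dg T) :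
    IntegrableOn dg (Set.Icc 0 T) volume := by
  haveI := finiteIcc T
  exact MemLp.integrable one_le_two h.1

lemma contOn_of_W12 {E : Type*} [NormedAddCommGroup E] [NormedSpace ℝ E] [CompleteSpace E]
    {g dg : ℝ → E} {T : ℝ} (hT : 0 ≤ T) (h : IsW12On g dg T) :
    ContinuousOn g (Set.Icc 0 T) := by
  have hint := integrable_of_W12 h
  rw [← Set.uIcc_of_le hT] at hint ⊢
  have : ContinuousOn (fun t => g 0 + ∫ s in (0:ℝ)..t, dg s) (Set.uIcc 0 T) :=
    continuousOn_const.add (intervalIntegral.continuousOn_primitive_interval hint)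
  refine ContinuousOn.congr this ?_
  rw [Set.uIcc_of_le hT]
  exact h.2

lemma mem_of_ae_closed {T : ℝ} (hT : 0 < T) {E : Type*} [MetricSpace E]
    {g : ℝ → E} (hg : ContinuousOn g (Set.Icc 0 T)) {C : Set E} (hC : IsClosed C)
    (hae : ∀ᵐ t ∂(volume.restrict (Set.Icc (0:ℝ) T)), g t ∈ C) :
    ∀ t ∈ Set.Icc (0:ℝ) T, g t ∈ C := by
  intro t₀ ht₀
  set S : Set ℝ := {t | t ∈ Set.Icc (0:ℝ) T ∧ g t ∈ C} with hS
  have hnull : volume ({t | g t ∉ C} ∩ Set.Icc (0:ℝ) T) = 0 := by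
    have h1 := hae
    rw [ae_iff, Measure.restrict_apply' measurableSet_Icc] at h1
    exact h1
  have hmemcl : t₀ ∈ closure S := by
    rw [Metric.mem_closure_iff]
    by_contra hcon
    push_neg at hcon
    obtain ⟨ε, hε, hball⟩ := hcon
    set a := max 0 (t₀ - ε/2) with ha
    set b := min T (t₀ + ε/2) with hb
    have h0 : 0 ≤ t₀ := ht₀.1
    have h1 : t₀ ≤ T := ht₀.2
    have hab : a < b :=
      max_lt (lt_min hT (by linarith)) (lt_min (by linarith) (by linarith))
    have hsub : Set.Icc a b ⊆ {t | g t ∉ C} ∩ Set.Icc (0:ℝ) T := by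
      intro s hs
      have hsa : t₀ - ε/2 ≤ s := le_trans (le_max_right _ _) hs.1
      have hsb : s ≤ t₀ + ε/2 := le_trans hs.2 (min_le_right _ _)
      have hIcc : s ∈ Set.Icc (0:ℝ) T :=
        ⟨le_trans (le_max_left _ _) hs.1, le_trans hs.2 (min_le_left _ _)⟩
      have hd : dist t₀ s < ε := by
        rw [Real.dist_eq, abs_lt]; constructor <;> linarith
      refine ⟨fun hgC => ?_, hIcc⟩
      exact absurd hd (not_lt.mpr (hball s ⟨hIcc, hgC⟩))
    have hz : volume (Set.Icc a b) = 0 := measure_mono_null hsub hnull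
    rw [Real.volume_Icc] at hz
    have hpos := ENNReal.ofReal_pos.mpr (sub_pos.mpr hab)
    rw [hz] at hpos
    exact lt_irrefl 0 hpos
  have hcw : ContinuousWithinAt g S t₀ :=
    (hg t₀ ht₀).mono (fun s hs => hs.1)
  have himg : g t₀ ∈ closure (g '' S) := hcw.mem_closure_image hmemcl
  have hsubC : g '' S ⊆ C := by rintro _ ⟨s, hs, rfl⟩; exact hs.2
  exact hC.closure_subset (closure_mono hsubC himg)

lemma integral_norm_le_memL2 {α : Type*} [MeasurableSpace α] {μ : Measure α} [IsFiniteMeasure μ]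
    {E : Type*} [NormedAddCommGroup E] {g : α → E} (hg : MemLp g 2 μ) :
    ∫ t, ‖g t‖ ∂μ ≤ (eLpNorm g 2 μ).toReal * (eLpNorm (fun _ : α => (1:ℝ)) 2 μ).toReal := by
  have h1 : MemLp (fun t => ‖g t‖) 2 μ := hg.norm
  have h2 : MemLp (fun _ : α => (1:ℝ)) 2 μ := memLp_const 1
  have hFG : ⟪h1.toLp _, h2.toLp _⟫ = ∫ t, ‖g t‖ ∂μ := by
    rw [L2.inner_def]
    refine integral_congr_ae ?_
    filter_upwards [h1.coeFn_toLp, h2.coeFn_toLp] with t ha hb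
    rw [ha, hb]
    simp [RCLike.inner_apply]
  have hcs := real_inner_le_norm (h1.toLp _) (h2.toLp _)
  rw [hFG] at hcs
  calc ∫ t, ‖g t‖ ∂μ ≤ ‖h1.toLp _‖ * ‖h2.toLp _‖ := hcs
    _ = (eLpNorm g 2 μ).toReal * (eLpNorm (fun _ : α => (1:ℝ)) 2 μ).toReal := by
        rw [Lp.norm_toLp, Lp.norm_toLp, eLpNorm_norm]

lemma weak_L2_bounded {α : Type*} [MeasurableSpace α] {μ : Measure α}
    {E : Type*} [NormedAddCommGroup E] [InnerProductSpace ℝ E] [CompleteSpace E]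
    (w : ℕ → α → E) (hw : ∀ k, MemLp (w k) 2 μ)
    (h : ∀ g : α → E, MemLp g 2 μ → Tendsto (fun k => ∫ t, ⟪w k t, g t⟫ ∂μ) atTop (𝓝 0)) :
    ∃ M, ∀ k, (eLpNorm (w k) 2 μ).toReal ≤ M := by
  set W : ℕ → (Lp E 2 μ) := fun k => (hw k).toLp (w k) with hWdef
  have hbd : ∀ g : Lp E 2 μ, ∃ Cg, ∀ k, ‖(innerSL ℝ (W k)) g‖ ≤ Cg := by
    intro g
    have hT : Tendsto (fun k => ∫ t, ⟪w k t, (g : α → E) t⟫ ∂μ) atTop (𝓝 0) := h _ (Lp.memLp g)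
    have heq : ∀ k, ∫ t, ⟪w k t, (g : α → E) t⟫ ∂μ = (innerSL ℝ (W k)) g := by
      intro k
      have h2 : (innerSL ℝ (W k)) g = ⟪W k, g⟫ := rfl
      rw [h2, L2.inner_def]
      refine integral_congr_ae ?_
      filter_upwards [(hw k).coeFn_toLp] with t ht
      rw [ht]
    have hT2 : Tendsto (fun k => (innerSL ℝ (W k)) g) atTop (𝓝 0) := hT.congr heq
    obtain ⟨Cg, hCg⟩ := (hT2.norm).bddAbove_range
    exact ⟨Cg, fun k => hCg (Set.mem_range_self k)⟩
  obtain ⟨M, hM⟩ := banach_steinhaus hbd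
  refine ⟨M, fun k => ?_⟩
  have h1 : ‖W k‖ = (eLpNorm (w k) 2 μ).toReal := Lp.norm_toLp _ _
  have h2 : ‖innerSL ℝ (W k)‖ = ‖W k‖ := innerSL_apply_norm ℝ (W k)
  rw [← h1, ← h2]
  exact hM k

lemma key_normal_ineq {α : Type*} [MeasurableSpace α] {μ : Measure α} [IsFiniteMeasure μ]
    {E : Type*} [NormedAddCommGroup E] [InnerProductSpace ℝ E]
    (v : ℕ → α → E) (vb : α → E) (p : ℕ → α → E) (pb : α → E) (y : E)
    (hv : ∀ k, Integrable (v k) μ)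
    (hvb : MemLp vb 2 μ)
    (hpm : ∀ k, AEStronglyMeasurable (p k) μ)
    (hpb_m : AEStronglyMeasurable pb μ)
    (hpb_bd : ∃ Kp : ℝ, ∀ᵐ t ∂μ, ‖pb t‖ ≤ Kp)
    (hp_bd : ∀ k, ∃ B : ℝ, ∀ᵐ t ∂μ, ‖p k t‖ ≤ B)
    (hM : ∃ M N₀, ∀ k ≥ N₀, ∫ t, ‖v k t‖ ∂μ ≤ M)
    (hweak : ∀ g : α → E, MemLp g 2 μ →
      Tendsto (fun k => ∫ t, ⟪v k t - vb t, g t⟫ ∂μ) atTop (𝓝 0))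
    (hup : ∀ δ > (0:ℝ), ∃ N, ∀ k ≥ N, ∀ᵐ t ∂μ, ‖p k t - pb t‖ ≤ δ)
    (hineq : ∀ k, ∀ᵐ t ∂μ, ⟪v k t, y - p k t⟫ ≤ 0) :
    ∀ᵐ t ∂μ, ⟪vb t, y - pb t⟫ ≤ 0 := by
  obtain ⟨Kp, hKp⟩ := hpb_bd
  have hvb_int : Integrable vb μ := hvb.integrable one_le_two
  have hpm' : AEStronglyMeasurable (fun t => y - pb t) μ :=
    aestronglyMeasurable_const.sub hpb_m
  have hybd : ∀ᵐ t ∂μ, ‖y - pb t‖ ≤ ‖y‖ + Kp := by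
    filter_upwards [hKp] with t ht
    calc ‖y - pb t‖ ≤ ‖y‖ + ‖pb t‖ := norm_sub_le _ _
      _ ≤ ‖y‖ + Kp := by linarith
  have hh_int : Integrable (fun t => ⟪vb t, y - pb t⟫) μ := by
    refine Integrable.mono' (hvb_int.norm.mul_const (‖y‖ + Kp)) (hvb.1.inner hpm') ?_
    filter_upwards [hybd] with t ht
    calc ‖⟪vb t, y - pb t⟫‖ ≤ ‖vb t‖ * ‖y - pb t‖ := norm_inner_le_norm _ _
      _ ≤ ‖vb t‖ * (‖y‖ + Kp) := mul_le_mul_of_nonneg_left ht (norm_nonneg _)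
  suffices h0 : (0 : α → ℝ) ≤ᵐ[μ] fun t => -⟪vb t, y - pb t⟫ by
    filter_upwards [h0] with t ht
    simpa using ht
  refine ae_nonneg_of_forall_setIntegral_nonneg hh_int.neg ?_
  intro s hs hμs
  rw [integral_neg, le_neg, neg_zero]
  -- goal : ∫ t in s, ⟪vb t, y - pb t⟫ ∂μ ≤ 0
  set c : ℝ := ∫ t in s, ⟪vb t, y - pb t⟫ ∂μ with hc
  set A : ℕ → ℝ := fun k => ∫ t in s, ⟪v k t - vb t, y - pb t⟫ ∂μ with hA
  set B : ℕ → ℝ := fun k => ∫ t in s, ⟪v k t, pb t - p k t⟫ ∂μ with hB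
  set I : ℕ → ℝ := fun k => ∫ t in s, ⟪v k t, y - p k t⟫ ∂μ with hI
  have hAint : ∀ k, Integrable (fun t => ⟪v k t - vb t, y - pb t⟫) μ := by
    intro k
    refine Integrable.mono' (((hv k).sub hvb_int).norm.mul_const (‖y‖ + Kp))
      (((hv k).aestronglyMeasurable.sub hvb.1).inner hpm') ?_
    filter_upwards [hybd] with t ht
    calc ‖⟪v k t - vb t, y - pb t⟫‖ ≤ ‖v k t - vb t‖ * ‖y - pb t‖ := norm_inner_le_norm _ _
      _ ≤ ‖v k t - vb t‖ * (‖y‖ + Kp) := mul_le_mul_of_nonneg_left ht (norm_nonneg _)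
  have hBint : ∀ k, Integrable (fun t => ⟪v k t, pb t - p k t⟫) μ := by
    intro k
    obtain ⟨Bk, hBk⟩ := hp_bd k
    refine Integrable.mono' ((hv k).norm.mul_const (Kp + Bk))
      ((hv k).aestronglyMeasurable.inner (hpb_m.sub (hpm k))) ?_
    filter_upwards [hKp, hBk] with t h1 h2
    calc ‖⟪v k t, pb t - p k t⟫‖ ≤ ‖v k t‖ * ‖pb t - p k t‖ := norm_inner_le_norm _ _
      _ ≤ ‖v k t‖ * (Kp + Bk) := by
          refine mul_le_mul_of_nonneg_left ?_ (norm_nonneg _)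
          calc ‖pb t - p k t‖ ≤ ‖pb t‖ + ‖p k t‖ := norm_sub_le _ _
            _ ≤ Kp + Bk := add_le_add h1 h2
  have hI_eq : ∀ k, I k = A k + B k + c := by
    intro k
    have hid : ∀ t, ⟪v k t, y - p k t⟫ =
        ⟪v k t - vb t, y - pb t⟫ + ⟪v k t, pb t - p k t⟫ + ⟪vb t, y - pb t⟫ := by
      intro t
      simp only [inner_sub_left, inner_sub_right]
      ring
    calc I k = ∫ t in s, (⟪v k t - vb t, y - pb t⟫ + ⟪v k t, pb t - p k t⟫
          + ⟪vb t, y - pb t⟫) ∂μ := by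
          rw [hI]
          exact integral_congr_ae (Eventually.of_forall fun t => hid t)
      _ = A k + B k + c := by
          have hab : Integrable
              (fun t => ⟪v k t - vb t, y - pb t⟫ + ⟪v k t, pb t - p k t⟫) μ :=
            (hAint k).add (hBint k)
          rw [integral_add (hab.restrict) (hh_int.restrict),
            integral_add ((hAint k).restrict) ((hBint k).restrict)]
  have hIle : ∀ k, I k ≤ 0 := by
    intro k
    refine integral_nonpos_of_ae ?_
    exact ae_restrict_of_ae (hineq k)
  -- A tends to 0
  have hAto : Tendsto A atTop (𝓝 0) := by
    set g : α → E := s.indicator (fun t => y - pb t) with hgdef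
    have hg : MemLp g 2 μ := by
      refine MemLp.of_bound (hpm'.indicator hs) (‖y‖ + Kp) ?_
      filter_upwards [hybd] with t ht
      rw [hgdef]
      by_cases hts : t ∈ s
      · rwa [Set.indicator_of_mem hts]
      · rw [Set.indicator_of_notMem hts, norm_zero]
        have : (0:ℝ) ≤ ‖y - pb t‖ := norm_nonneg _
        linarith
    have := hweak g hg
    refine Tendsto.congr ?_ this
    intro k
    show ∫ t, ⟪v k t - vb t, g t⟫ ∂μ = ∫ t in s, ⟪v k t - vb t, y - pb t⟫ ∂μ
    rw [← integral_indicator hs]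
    refine integral_congr_ae (Eventually.of_forall fun t => ?_)
    by_cases hts : t ∈ s
    · simp [hgdef, Set.indicator_of_mem hts]
    · simp [hgdef, Set.indicator_of_notMem hts]
  -- B tends to 0
  have hBto : Tendsto B atTop (𝓝 0) := by
    obtain ⟨M, N₀, hMN⟩ := hM
    set M' : ℝ := max M 0 with hM'
    rw [Metric.tendsto_atTop]
    intro ε hε
    have hδpos : (0:ℝ) < ε / (2 * (M' + 1)) := by positivity
    obtain ⟨N₁, hN₁⟩ := hup _ hδpos
    refine ⟨max N₀ N₁, fun k hk => ?_⟩
    have hk₀ : k ≥ N₀ := le_trans (le_max_left _ _) hk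
    have hk₁ : k ≥ N₁ := le_trans (le_max_right _ _) hk
    set δ : ℝ := ε / (2 * (M' + 1)) with hδ
    have hstep1 : ‖B k‖ ≤ ∫ t in s, ‖⟪v k t, pb t - p k t⟫‖ ∂μ :=
      norm_integral_le_integral_norm _
    have hstep2 : ∫ t in s, ‖⟪v k t, pb t - p k t⟫‖ ∂μ ≤ ∫ t in s, ‖v k t‖ * δ ∂μ := by
      refine integral_mono_ae ((hBint k).norm.restrict) (((hv k).norm.mul_const δ).restrict) ?_
      refine ae_restrict_of_ae ?_
      filter_upwards [hN₁ k hk₁] with t ht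
      calc ‖⟪v k t, pb t - p k t⟫‖ ≤ ‖v k t‖ * ‖pb t - p k t‖ := norm_inner_le_norm _ _
        _ ≤ ‖v k t‖ * δ := by
            refine mul_le_mul_of_nonneg_left ?_ (norm_nonneg _)
            rw [← norm_neg]
            simpa using ht
    have hstep3 : ∫ t in s, ‖v k t‖ * δ ∂μ ≤ δ * M' := by
      rw [integral_mul_const]
      have h1 : ∫ t in s, ‖v k t‖ ∂μ ≤ ∫ t, ‖v k t‖ ∂μ :=
        setIntegral_le_integral (hv k).norm (Eventually.of_forall fun t => norm_nonneg _)
      have h2 : ∫ t, ‖v k t‖ ∂μ ≤ M' := le_trans (hMN k hk₀) (le_max_left _ _)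
      calc (∫ t in s, ‖v k t‖ ∂μ) * δ ≤ M' * δ := by
            refine mul_le_mul_of_nonneg_right (le_trans h1 h2) hδpos.le
        _ = δ * M' := mul_comm _ _
    have hfinal : ‖B k‖ ≤ δ * M' := le_trans hstep1 (le_trans hstep2 hstep3)
    rw [dist_zero_right]
    have hM'nonneg : (0:ℝ) ≤ M' := le_max_right _ _
    have : δ * M' < ε := by
      rw [hδ]
      rw [div_mul_eq_mul_div, mul_comm]
      rw [div_lt_iff₀ (by positivity)]
      nlinarith
    exact lt_of_le_of_lt hfinal this
  have hIto : Tendsto I atTop (𝓝 c) := by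
    have h1 : Tendsto (fun k => A k + B k + c) atTop (𝓝 (0 + 0 + c)) :=
      Tendsto.add_const c (hAto.add hBto)
    rw [zero_add, zero_add] at h1
    exact Tendsto.congr (fun k => (hI_eq k).symm) h1
  exact le_of_tendsto hIto (Eventually.of_forall hIle)


lemma integrable_inner_memL2 {α : Type*} [MeasurableSpace α] {μ : Measure α}
    {E : Type*} [NormedAddCommGroup E] [InnerProductSpace ℝ E]
    {f g : α → E} (hf : MemLp f 2 μ) (hg : MemLp g 2 μ) :
    Integrable (fun t => ⟪f t, g t⟫) μ := by
  have h := L2.integrable_inner (𝕜 := ℝ) (hf.toLp f) (hg.toLp g)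
  refine h.congr ?_
  filter_upwards [hf.coeFn_toLp, hg.coeFn_toLp] with t h1 h2
  rw [h1, h2]

/-- closedness of the perturbed sweeping dynamics under uniform convergence
of trajectories and weak `L²` convergence of derivatives. -/
theorem sweeping_dynamics_closedness
    (n m d : ℕ) (T : ℝ) (hT : 0 < T)
    (xstar : Fin m → En n) (C : Set (En n))
    (hC : C = {x : En n | ∀ i, ⟪xstar i, x⟫ ≤ 0})
    (f : En n → En d → En n)
    (hf_cont : Continuous fun p : En n × En d => f p.1 p.2)
    (hf_lip : ∀ ε > (0:ℝ), ∃ K > (0:ℝ), ∀ (x y : En n) (a : En d),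
      ‖x‖ ≤ ε → ‖y‖ ≤ ε → ‖f x a - f y a‖ ≤ K * ‖x - y‖)
    -- the sequence of solutions
    (xk dxk uk duk : ℕ → ℝ → En n) (ak dak : ℕ → ℝ → En d)
    (hW12k : ∀ k : ℕ, IsW12On (xk k) (dxk k) T ∧ IsW12On (uk k) (duk k) T ∧
      IsW12On (ak k) (dak k) T)
    (hinclk : ∀ k : ℕ, ∀ᵐ t ∂(volume.restrict (Set.Icc (0:ℝ) T)),
      -dxk k t ∈ normalCone C (xk k t - uk k t) + {f (xk k t) (ak k t)})
    -- the limit triple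
    (xb dxb ub dub : ℝ → En n) (ab dab : ℝ → En d)
    (hW12 : IsW12On xb dxb T ∧ IsW12On ub dub T ∧ IsW12On ab dab T)
    -- uniform convergence on `[0,T]`
    (hunif : ∀ δ > (0:ℝ), ∃ N : ℕ, ∀ k ≥ N, ∀ t ∈ Set.Icc (0:ℝ) T,
      ‖xk k t - xb t‖ ≤ δ ∧ ‖uk k t - ub t‖ ≤ δ ∧ ‖ak k t - ab t‖ ≤ δ)
    -- weak `L²` convergence of the derivatives
    (hweak : ∀ (gx gu : ℝ → En n) (ga : ℝ → En d),
      MemLp gx 2 (volume.restrict (Set.Icc (0:ℝ) T)) →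
      MemLp gu 2 (volume.restrict (Set.Icc (0:ℝ) T)) →
      MemLp ga 2 (volume.restrict (Set.Icc (0:ℝ) T)) →
      Tendsto (fun k : ℕ => ∫ t in (0:ℝ)..T,
        (⟪dxk k t - dxb t, gx t⟫ + ⟪duk k t - dub t, gu t⟫ + ⟪dak k t - dab t, ga t⟫))
        atTop (𝓝 0)) :
    (∀ t ∈ Set.Icc (0:ℝ) T, xb t - ub t ∈ C) ∧
    (∀ᵐ t ∂(volume.restrict (Set.Icc (0:ℝ) T)),
      -dxb t ∈ normalCone C (xb t - ub t) + {f (xb t) (ab t)}) := by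
  have hT' : (0:ℝ) ≤ T := hT.le
  set μ := volume.restrict (Set.Icc (0:ℝ) T) with hμ
  haveI : IsFiniteMeasure μ := finiteIcc T
  have haeIcc : ∀ᵐ t ∂μ, t ∈ Set.Icc (0:ℝ) T := by
    rw [hμ]; exact ae_restrict_mem measurableSet_Icc
  -- continuity of all trajectories
  have xbc := contOn_of_W12 hT' hW12.1
  have ubc := contOn_of_W12 hT' hW12.2.1
  have abc := contOn_of_W12 hT' hW12.2.2
  have xkc : ∀ k, ContinuousOn (xk k) (Set.Icc 0 T) := fun k => contOn_of_W12 hT' (hW12k k).1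
  have ukc : ∀ k, ContinuousOn (uk k) (Set.Icc 0 T) := fun k => contOn_of_W12 hT' (hW12k k).2.1
  have akc : ∀ k, ContinuousOn (ak k) (Set.Icc 0 T) := fun k => contOn_of_W12 hT' (hW12k k).2.2
  -- C is closed
  have hCclosed : IsClosed C := by
    rw [hC]
    have hE : {x : En n | ∀ i, ⟪xstar i, x⟫ ≤ 0} = ⋂ i, {x : En n | ⟪xstar i, x⟫ ≤ 0} := by
      ext x; simp
    rw [hE]
    exact isClosed_iInter fun i =>
      isClosed_le (continuous_const.inner continuous_id) continuous_const
  -- a.e. membership of the approximating positions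
  have hpmemk : ∀ k, ∀ᵐ t ∂μ, xk k t - uk k t ∈ C := by
    intro k
    filter_upwards [hinclk k] with t ht
    rw [Set.mem_add] at ht
    obtain ⟨w, hw, z, _, _⟩ := ht
    exact hw.1
  -- part 1
  have hpart1ae : ∀ᵐ t ∂μ, xb t - ub t ∈ C := by
    filter_upwards [ae_all_iff.mpr hpmemk, haeIcc] with t ht htI
    have htend : Tendsto (fun k => xk k t - uk k t) atTop (𝓝 (xb t - ub t)) := by
      rw [Metric.tendsto_atTop]
      intro ε hε
      obtain ⟨N, hN⟩ := hunif (ε/3) (by linarith)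
      refine ⟨N, fun k hk => ?_⟩
      obtain ⟨h1, h2, _⟩ := hN k hk t htI
      rw [dist_eq_norm]
      have he : xk k t - uk k t - (xb t - ub t) = (xk k t - xb t) - (uk k t - ub t) := by abel
      calc ‖xk k t - uk k t - (xb t - ub t)‖ = ‖(xk k t - xb t) - (uk k t - ub t)‖ := by rw [he]
        _ ≤ ‖xk k t - xb t‖ + ‖uk k t - ub t‖ := norm_sub_le _ _
        _ ≤ ε/3 + ε/3 := add_le_add h1 h2
        _ < ε := by linarith
    exact hCclosed.mem_of_tendsto htend (Eventually.of_forall ht)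
  have hpart1 : ∀ t ∈ Set.Icc (0:ℝ) T, xb t - ub t ∈ C := by
    refine mem_of_ae_closed hT (xbc.sub ubc) hCclosed ?_
    rw [← hμ]; exact hpart1ae
  refine ⟨hpart1, ?_⟩
  -- bounds on the limit trajectory and a compact set capturing the dynamics
  obtain ⟨Rx, hRx⟩ := isCompact_Icc.exists_bound_of_continuousOn xbc
  obtain ⟨Ra, hRa⟩ := isCompact_Icc.exists_bound_of_continuousOn abc
  obtain ⟨Ru, hRu⟩ := isCompact_Icc.exists_bound_of_continuousOn ubc
  set K : Set (En n × En d) := closedBall 0 (|Rx|+1) ×ˢ closedBall 0 (|Ra|+1) with hK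
  have hKcomp : IsCompact K := (isCompact_closedBall _ _).prod (isCompact_closedBall _ _)
  have hfu := hKcomp.uniformContinuousOn_of_continuous hf_cont.continuousOn
  rw [Metric.uniformContinuousOn_iff] at hfu
  -- uniform convergence of `f` along the trajectories
  have hfconv : ∀ ε > (0:ℝ), ∃ N, ∀ k ≥ N, ∀ t ∈ Set.Icc (0:ℝ) T,
      ‖f (xk k t) (ak k t) - f (xb t) (ab t)‖ ≤ ε := by
    intro ε hε
    obtain ⟨δ, hδpos, hδ⟩ := hfu ε hε
    obtain ⟨N, hN⟩ := hunif (min 1 (δ/2)) (by positivity)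
    refine ⟨N, fun k hk t ht => ?_⟩
    obtain ⟨h1, h2, h3⟩ := hN k hk t ht
    have hx1 : ‖xk k t - xb t‖ ≤ 1 := le_trans h1 (min_le_left _ _)
    have hx2 : ‖xk k t - xb t‖ ≤ δ/2 := le_trans h1 (min_le_right _ _)
    have ha1 : ‖ak k t - ab t‖ ≤ 1 := le_trans h3 (min_le_left _ _)
    have ha2 : ‖ak k t - ab t‖ ≤ δ/2 := le_trans h3 (min_le_right _ _)
    have hxbK : ‖xb t‖ ≤ |Rx| := le_trans (hRx t ht) (le_abs_self _)
    have habK : ‖ab t‖ ≤ |Ra| := le_trans (hRa t ht) (le_abs_self _)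
    have hmem1 : (xk k t, ak k t) ∈ K := by
      constructor
      · rw [mem_closedBall_zero_iff]
        calc ‖xk k t‖ ≤ ‖xb t‖ + ‖xk k t - xb t‖ := norm_le_insert' _ _
          _ ≤ |Rx| + 1 := add_le_add hxbK hx1
      · rw [mem_closedBall_zero_iff]
        calc ‖ak k t‖ ≤ ‖ab t‖ + ‖ak k t - ab t‖ := norm_le_insert' _ _
          _ ≤ |Ra| + 1 := add_le_add habK ha1
    have hmem2 : (xb t, ab t) ∈ K := by
      constructor
      · rw [mem_closedBall_zero_iff]; linarith
      · rw [mem_closedBall_zero_iff]; linarith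
    have hdist : dist ((xk k t, ak k t) : En n × En d) (xb t, ab t) < δ := by
      rw [Prod.dist_eq]
      refine max_lt ?_ ?_
      · rw [dist_eq_norm]; linarith
      · rw [dist_eq_norm]; linarith
    have := hδ _ hmem1 _ hmem2 hdist
    rw [← dist_eq_norm]
    exact this.le
  -- MemLp of the forcing terms
  have hfbc : ContinuousOn (fun t => f (xb t) (ab t)) (Set.Icc (0:ℝ) T) :=
    hf_cont.comp_continuousOn (xbc.prodMk abc)
  obtain ⟨Cfb, hCfb⟩ := isCompact_Icc.exists_bound_of_continuousOn hfbc
  have hfbM : MemLp (fun t => f (xb t) (ab t)) 2 μ := by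
    refine MemLp.of_bound ?_ Cfb ?_
    · rw [hμ]; exact hfbc.aestronglyMeasurable measurableSet_Icc
    · filter_upwards [haeIcc] with t ht; exact hCfb t ht
  have hfkM : ∀ k, MemLp (fun t => f (xk k t) (ak k t)) 2 μ := by
    intro k
    have hc : ContinuousOn (fun t => f (xk k t) (ak k t)) (Set.Icc (0:ℝ) T) :=
      hf_cont.comp_continuousOn ((xkc k).prodMk (akc k))
    obtain ⟨Cfk, hCfk⟩ := isCompact_Icc.exists_bound_of_continuousOn hc
    refine MemLp.of_bound ?_ Cfk ?_
    · rw [hμ]; exact hc.aestronglyMeasurable measurableSet_Icc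
    · filter_upwards [haeIcc] with t ht; exact hCfk t ht
  -- weak convergence specialised to the x-component, and over μ
  have hweak' : ∀ gx : ℝ → En n, MemLp gx 2 μ →
      Tendsto (fun k => ∫ t, ⟪dxk k t - dxb t, gx t⟫ ∂μ) atTop (𝓝 0) := by
    intro gx hgx
    have h0n : MemLp (fun _ : ℝ => (0:En n)) 2 μ := memLp_const 0
    have h0d : MemLp (fun _ : ℝ => (0:En d)) 2 μ := memLp_const 0
    have hw := hweak gx (fun _ => 0) (fun _ => 0) hgx h0n h0d
    refine Tendsto.congr (fun k => ?_) hw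
    calc ∫ t in (0:ℝ)..T, (⟪dxk k t - dxb t, gx t⟫ + ⟪duk k t - dub t, (0:En n)⟫
          + ⟪dak k t - dab t, (0:En d)⟫)
        = ∫ t in Set.Ioc (0:ℝ) T, ⟪dxk k t - dxb t, gx t⟫ := by
          rw [intervalIntegral.integral_of_le hT']
          simp only [inner_zero_right, add_zero]
      _ = ∫ t, ⟪dxk k t - dxb t, gx t⟫ ∂μ := by
          rw [hμ, ← integral_Icc_eq_integral_Ioc]
  -- uniform L² bound from Banach–Steinhaus
  have hΔM : ∀ k, MemLp (fun t => dxk k t - dxb t) 2 μ :=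
    fun k => (hW12k k).1.1.sub hW12.1.1
  obtain ⟨M₀, hM₀⟩ := weak_L2_bounded (fun k t => dxk k t - dxb t) hΔM hweak'
  set c1 := (eLpNorm (fun _ : ℝ => (1:ℝ)) 2 μ).toReal with hc1def
  have hc1 : ∀ k, ∫ t, ‖dxk k t - dxb t‖ ∂μ ≤ M₀ * c1 := by
    intro k
    refine le_trans (integral_norm_le_memL2 (hΔM k)) ?_
    exact mul_le_mul_of_nonneg_right (hM₀ k) ENNReal.toReal_nonneg
  have hdxb_int : Integrable dxb μ := hW12.1.1.integrable one_le_two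
  set cb := ∫ t, ‖dxb t‖ ∂μ with hcbdef
  set measT := (μ Set.univ).toReal with hmeasT
  -- the normal-cone parts of the dynamics
  set v : ℕ → ℝ → En n := fun k t => -dxk k t - f (xk k t) (ak k t) with hv
  set vb : ℝ → En n := fun t => -dxb t - f (xb t) (ab t) with hvb
  have hvM : ∀ k, MemLp (v k) 2 μ := fun k => ((hW12k k).1.1.neg).sub (hfkM k)
  have hv_int : ∀ k, Integrable (v k) μ := fun k => (hvM k).integrable one_le_two
  have hvbM : MemLp vb 2 μ := (hW12.1.1.neg).sub hfbM
  -- eventual uniform L¹ bound on `v`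
  have hMv : ∃ M N₀, ∀ k ≥ N₀, ∫ t, ‖v k t‖ ∂μ ≤ M := by
    obtain ⟨N₁, hN₁⟩ := hfconv 1 one_pos
    refine ⟨M₀ * c1 + cb + (|Cfb| + 1) * measT, N₁, fun k hk => ?_⟩
    have hb1 : ∀ᵐ t ∂μ, ‖v k t‖ ≤
        ‖dxk k t - dxb t‖ + ‖dxb t‖ + ‖f (xk k t) (ak k t)‖ := by
      refine Eventually.of_forall fun t => ?_
      have h1 : ‖v k t‖ ≤ ‖dxk k t‖ + ‖f (xk k t) (ak k t)‖ := by
        rw [hv]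
        calc ‖-dxk k t - f (xk k t) (ak k t)‖
            ≤ ‖-dxk k t‖ + ‖f (xk k t) (ak k t)‖ := norm_sub_le _ _
          _ = ‖dxk k t‖ + ‖f (xk k t) (ak k t)‖ := by rw [norm_neg]
      have h2 : ‖dxk k t‖ ≤ ‖dxk k t - dxb t‖ + ‖dxb t‖ := by
        calc ‖dxk k t‖ ≤ ‖dxb t‖ + ‖dxk k t - dxb t‖ := norm_le_insert' _ _
          _ = ‖dxk k t - dxb t‖ + ‖dxb t‖ := add_comm _ _
      linarith
    have hint1 : Integrable
        (fun t => ‖dxk k t - dxb t‖ + ‖dxb t‖ + ‖f (xk k t) (ak k t)‖) μ :=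
      (((hΔM k).integrable one_le_two).norm.add hdxb_int.norm).add
        ((hfkM k).integrable one_le_two).norm
    have h2 := integral_mono_ae (hv_int k).norm hint1 hb1
    have h3 : ∫ t, (‖dxk k t - dxb t‖ + ‖dxb t‖ + ‖f (xk k t) (ak k t)‖) ∂μ =
        (∫ t, ‖dxk k t - dxb t‖ ∂μ) + (∫ t, ‖dxb t‖ ∂μ) + ∫ t, ‖f (xk k t) (ak k t)‖ ∂μ := by
      have ha : Integrable (fun t => ‖dxk k t - dxb t‖ + ‖dxb t‖) μ :=
        ((hΔM k).integrable one_le_two).norm.add hdxb_int.norm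
      rw [integral_add ha ((hfkM k).integrable one_le_two).norm,
        integral_add ((hΔM k).integrable one_le_two).norm hdxb_int.norm]
    have h4 : ∫ t, ‖f (xk k t) (ak k t)‖ ∂μ ≤ (|Cfb| + 1) * measT := by
      have hb : ∀ᵐ t ∂μ, ‖f (xk k t) (ak k t)‖ ≤ |Cfb| + 1 := by
        filter_upwards [haeIcc] with t ht
        calc ‖f (xk k t) (ak k t)‖
            ≤ ‖f (xb t) (ab t)‖ + ‖f (xk k t) (ak k t) - f (xb t) (ab t)‖ :=
              norm_le_insert' _ _
          _ ≤ |Cfb| + 1 := add_le_add (le_trans (hCfb t ht) (le_abs_self _)) (hN₁ k hk t ht)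
      calc ∫ t, ‖f (xk k t) (ak k t)‖ ∂μ
          ≤ ∫ _t, (|Cfb| + 1) ∂μ :=
            integral_mono_ae ((hfkM k).integrable one_le_two).norm (integrable_const _) hb
        _ = (|Cfb| + 1) * measT := by rw [integral_const, smul_eq_mul, hmeasT, measureReal_def]; ring
    have h5 := hc1 k
    rw [h3] at h2
    linarith
  -- weak L² convergence of `v`
  have hvweak : ∀ g : ℝ → En n, MemLp g 2 μ →
      Tendsto (fun k => ∫ t, ⟪v k t - vb t, g t⟫ ∂μ) atTop (𝓝 0) := by
    intro g hg
    have hgint : Integrable g μ := hg.integrable one_le_two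
    set cg := ∫ t, ‖g t‖ ∂μ with hcgdef
    have hcg0 : 0 ≤ cg := integral_nonneg fun t => norm_nonneg _
    have hmid : Tendsto
        (fun k => ∫ t, ⟪f (xk k t) (ak k t) - f (xb t) (ab t), g t⟫ ∂μ) atTop (𝓝 0) := by
      rw [Metric.tendsto_atTop]
      intro ε hε
      obtain ⟨N, hN⟩ := hfconv (ε/(cg+1)) (by positivity)
      refine ⟨N, fun k hk => ?_⟩
      rw [dist_zero_right]
      have hint : Integrable (fun t => ⟪f (xk k t) (ak k t) - f (xb t) (ab t), g t⟫) μ :=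
        integrable_inner_memL2 ((hfkM k).sub hfbM) hg
      have hb : ∀ᵐ t ∂μ, ‖⟪f (xk k t) (ak k t) - f (xb t) (ab t), g t⟫‖ ≤
          (ε/(cg+1)) * ‖g t‖ := by
        filter_upwards [haeIcc] with t ht
        calc ‖⟪f (xk k t) (ak k t) - f (xb t) (ab t), g t⟫‖
            ≤ ‖f (xk k t) (ak k t) - f (xb t) (ab t)‖ * ‖g t‖ := norm_inner_le_norm _ _
          _ ≤ (ε/(cg+1)) * ‖g t‖ :=
              mul_le_mul_of_nonneg_right (hN k hk t ht) (norm_nonneg _)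
      calc ‖∫ t, ⟪f (xk k t) (ak k t) - f (xb t) (ab t), g t⟫ ∂μ‖
          ≤ ∫ t, ‖⟪f (xk k t) (ak k t) - f (xb t) (ab t), g t⟫‖ ∂μ :=
            norm_integral_le_integral_norm _
        _ ≤ ∫ t, (ε/(cg+1)) * ‖g t‖ ∂μ :=
            integral_mono_ae hint.norm (hgint.norm.const_mul _) hb
        _ = (ε/(cg+1)) * cg := by rw [integral_const_mul]
        _ < ε := by
            rw [div_mul_eq_mul_div, div_lt_iff₀ (by positivity : (0:ℝ) < cg + 1)]
            nlinarith
    have hx := hweak' g hg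
    have hT2 : Tendsto (fun k => -(∫ t, ⟪dxk k t - dxb t, g t⟫ ∂μ)
        - ∫ t, ⟪f (xk k t) (ak k t) - f (xb t) (ab t), g t⟫ ∂μ) atTop (𝓝 0) := by
      have := (hx.neg).sub hmid
      simpa using this
    refine Tendsto.congr (fun k => ?_) hT2
    have hptw : ∀ t, ⟪v k t - vb t, g t⟫ =
        -⟪dxk k t - dxb t, g t⟫ - ⟪f (xk k t) (ak k t) - f (xb t) (ab t), g t⟫ := by
      intro t
      have he : v k t - vb t =
          -(dxk k t - dxb t) - (f (xk k t) (ak k t) - f (xb t) (ab t)) := by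
        rw [hv, hvb]; beta_reduce; abel
      rw [he, inner_sub_left, inner_neg_left]
    rw [integral_congr_ae (Eventually.of_forall hptw)]
    have hi1 : Integrable (fun t => -⟪dxk k t - dxb t, g t⟫) μ :=
      (integrable_inner_memL2 (hΔM k) hg).neg
    have hi2 : Integrable (fun t => ⟪f (xk k t) (ak k t) - f (xb t) (ab t), g t⟫) μ :=
      integrable_inner_memL2 ((hfkM k).sub hfbM) hg
    rw [integral_sub hi1 hi2, integral_neg]
  -- positions
  set p : ℕ → ℝ → En n := fun k t => xk k t - uk k t with hp
  set pb : ℝ → En n := fun t => xb t - ub t with hpbdef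
  have hup : ∀ δ > (0:ℝ), ∃ N, ∀ k ≥ N, ∀ᵐ t ∂μ, ‖p k t - pb t‖ ≤ δ := by
    intro δ hδ
    obtain ⟨N, hN⟩ := hunif (δ/2) (by linarith)
    refine ⟨N, fun k hk => ?_⟩
    filter_upwards [haeIcc] with t ht
    obtain ⟨h1, h2, _⟩ := hN k hk t ht
    have he : p k t - pb t = (xk k t - xb t) - (uk k t - ub t) := by
      rw [hp, hpbdef]; beta_reduce; abel
    calc ‖p k t - pb t‖ = ‖(xk k t - xb t) - (uk k t - ub t)‖ := by rw [he]
      _ ≤ ‖xk k t - xb t‖ + ‖uk k t - ub t‖ := norm_sub_le _ _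
      _ ≤ δ/2 + δ/2 := add_le_add h1 h2
      _ = δ := by ring
  have hpm : ∀ k, AEStronglyMeasurable (p k) μ := fun k => by
    rw [hμ]; exact ((xkc k).sub (ukc k)).aestronglyMeasurable measurableSet_Icc
  have hpbm : AEStronglyMeasurable pb μ := by
    rw [hμ]; exact (xbc.sub ubc).aestronglyMeasurable measurableSet_Icc
  have hpb_bd : ∃ Kp : ℝ, ∀ᵐ t ∂μ, ‖pb t‖ ≤ Kp := by
    refine ⟨|Rx| + |Ru|, ?_⟩
    filter_upwards [haeIcc] with t ht
    calc ‖pb t‖ ≤ ‖xb t‖ + ‖ub t‖ := norm_sub_le _ _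
      _ ≤ |Rx| + |Ru| := add_le_add (le_trans (hRx t ht) (le_abs_self _))
          (le_trans (hRu t ht) (le_abs_self _))
  have hp_bd : ∀ k, ∃ B : ℝ, ∀ᵐ t ∂μ, ‖p k t‖ ≤ B := by
    intro k
    obtain ⟨B1, h1⟩ := isCompact_Icc.exists_bound_of_continuousOn (xkc k)
    obtain ⟨B2, h2⟩ := isCompact_Icc.exists_bound_of_continuousOn (ukc k)
    refine ⟨|B1| + |B2|, ?_⟩
    filter_upwards [haeIcc] with t ht
    calc ‖p k t‖ ≤ ‖xk k t‖ + ‖uk k t‖ := norm_sub_le _ _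
      _ ≤ |B1| + |B2| := add_le_add (le_trans (h1 t ht) (le_abs_self _))
          (le_trans (h2 t ht) (le_abs_self _))
  -- cone membership of `v k`
  have hvcone : ∀ k, ∀ᵐ t ∂μ, v k t ∈ normalCone C (p k t) := by
    intro k
    filter_upwards [hinclk k] with t ht
    rw [Set.mem_add] at ht
    obtain ⟨w, hw, z, hz, hsum⟩ := ht
    rw [Set.mem_singleton_iff] at hz
    have hwv : w = v k t := by
      have h1 : w = -dxk k t - z := eq_sub_of_add_eq hsum
      rw [h1, hz, hv]
    rw [hwv] at hw
    exact hw
  -- dense countable subset of C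
  obtain ⟨D, hDC, hDcount, hCD⟩ :=
    (TopologicalSpace.IsSeparable.of_separableSpace C).exists_countable_dense_subset
  have hkey : ∀ y ∈ D, ∀ᵐ t ∂μ, ⟪vb t, y - pb t⟫ ≤ 0 := by
    intro y hy
    refine key_normal_ineq v vb p pb y hv_int hvbM hpm hpbm hpb_bd hp_bd hMv hvweak hup ?_
    intro k
    filter_upwards [hvcone k] with t ht
    exact ht.2 y (hDC hy)
  filter_upwards [(ae_ball_iff hDcount).mpr hkey, haeIcc] with t htD htI
  refine Set.mem_add.mpr ⟨vb t, ⟨hpart1 t htI, fun y hy => ?_⟩,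
    f (xb t) (ab t), Set.mem_singleton _, ?_⟩
  · have hZ : IsClosed {y' : En n | ⟪vb t, y' - pb t⟫ ≤ 0} :=
      isClosed_le (continuous_const.inner (continuous_id.sub continuous_const))
        continuous_const
    have hsub : C ⊆ {y' : En n | ⟪vb t, y' - pb t⟫ ≤ 0} :=
      hCD.trans (hZ.closure_subset_iff.mpr fun y' hy' => htD y' hy')
    exact hsub hy
  · show vb t + f (xb t) (ab t) = -dxb t
    rw [hvb]
    beta_reduce
    abel
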